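/- Let 0 < α < 1, let φ : ℝ^L → ℝ^L be continuous, let x : [0,T] → ℝ^L be continuous, and let x₀ ∈ ℝ^L. Then the function t ↦ x₀ + (1/Γ(α)) ∫_0^t (t−s)^{α−1} φ(x(s)) ds is continuous on [0,T]; that is, the fractional Volterra operator T_{x₀} maps C([0,T], ℝ^L) into C([0,T], ℝ^L). -/

import Mathlib

/-- For `0 < α < 1`, continuous `φ : ℝ^L → ℝ^L`, continuous `x : [0,T] → ℝ^L`
and `x₀ ∈ ℝ^L`, the function
`t ↦ x₀ + (1/Γ(α)) ∫_0^t (t-s)^{α-1} φ(x(s)) ds` is continuous on `[0,T]`: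
the fractional Volterra operator maps `C([0,T], ℝ^L)` into itself. -/
theorem volterra_operator_maps_continuous
    (T : ℝ) (hT : 0 < T) (L : ℕ) (hL : 1 ≤ L) (α : ℝ) (hα : 0 < α) (hα1 : α < 1)
    (φ : (Fin L → ℝ) → (Fin L → ℝ)) (hφ : Continuous φ)
    (x : ℝ → Fin L → ℝ) (hx : ContinuousOn x (Set.Icc 0 T))
    (x₀ : Fin L → ℝ) :
    ContinuousOn
      (fun t => fun k : Fin L =>
        x₀ k + (1 / Real.Gamma α) * ∫ s in (0:ℝ)..t, (t - s) ^ (α - 1) * φ (x s) k)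
      (Set.Icc 0 T) := by
  rw [continuousOn_pi]
  intro k
  -- bound for the k-th component of φ ∘ x on [0,T]
  obtain ⟨M, hM⟩ : ∃ M, ∀ s ∈ Set.Icc (0:ℝ) T, ‖φ (x s) k‖ ≤ M :=
    isCompact_Icc.exists_bound_of_continuousOn
      ((continuous_apply k).comp_continuousOn (hφ.comp_continuousOn hx))
  -- the reparametrized integral
  set g : ℝ → ℝ := fun t =>
    ∫ σ in Set.Ioo (0:ℝ) 1, (1 - σ) ^ (α - 1) * φ (x (σ * t)) k with hg_def
  have hmaps : ∀ t ∈ Set.Icc (0:ℝ) T, ∀ σ ∈ Set.Ioo (0:ℝ) 1, σ * t ∈ Set.Icc (0:ℝ) T := by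
    intro t ht σ hσ
    constructor
    · exact mul_nonneg hσ.1.le ht.1
    · calc σ * t ≤ 1 * t := by nlinarith [ht.1, hσ.2.le]
        _ ≤ T := by simpa using ht.2
  have hg : ContinuousOn g (Set.Icc 0 T) := by
    apply MeasureTheory.continuousOn_of_dominated
      (bound := fun σ => (1 - σ) ^ (α - 1) * M)
    · intro t ht
      have hcont : ContinuousOn
          (fun σ : ℝ => (1 - σ) ^ (α - 1) * φ (x (σ * t)) k) (Set.Ioo 0 1) := by
        apply ContinuousOn.mul
        · exact (continuousOn_const.sub continuousOn_id).rpow_const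
            (fun σ hσ => Or.inl (by simp only [Set.mem_Ioo] at hσ; intro h; simp only [Pi.sub_apply, id_eq] at h; linarith [hσ.2]))
        · apply (continuous_apply k).comp_continuousOn
          apply hφ.comp_continuousOn
          apply hx.comp (continuous_mul_right t).continuousOn
          intro σ hσ; exact hmaps t ht σ hσ
      exact hcont.aestronglyMeasurable measurableSet_Ioo
    · intro t ht
      filter_upwards [MeasureTheory.ae_restrict_mem measurableSet_Ioo] with σ hσ
      have h1 : (0:ℝ) ≤ 1 - σ := by linarith [hσ.2.le]
      have h2 : (0:ℝ) ≤ (1 - σ) ^ (α - 1) := Real.rpow_nonneg h1 _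
      rw [norm_mul, Real.norm_eq_abs, abs_of_nonneg h2]
      exact mul_le_mul_of_nonneg_left (hM _ (hmaps t ht σ hσ)) h2
    · have h1 : IntervalIntegrable (fun s : ℝ => s ^ (α - 1)) MeasureTheory.volume 0 1 :=
        intervalIntegral.intervalIntegrable_rpow' (by linarith)
      have h2 := ((h1.comp_sub_left 1).mul_const M).symm
      simp only [sub_zero, sub_self] at h2
      rw [intervalIntegrable_iff_integrableOn_Ioc_of_le (by norm_num)] at h2
      exact h2.mono_set Set.Ioo_subset_Ioc_self
    · filter_upwards [MeasureTheory.ae_restrict_mem measurableSet_Ioo] with σ hσ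
      apply ContinuousOn.mul continuousOn_const
      apply (continuous_apply k).comp_continuousOn
      apply hφ.comp_continuousOn
      apply hx.comp (continuous_mul_left σ).continuousOn
      intro t ht; exact hmaps t ht σ hσ
  -- key identity
  have hEq : ∀ t ∈ Set.Icc (0:ℝ) T,
      (∫ s in (0:ℝ)..t, (t - s) ^ (α - 1) * φ (x s) k) = t ^ α * g t := by
    intro t ht
    rcases eq_or_lt_of_le ht.1 with h0 | h0
    · rw [← h0]
      simp [Real.zero_rpow hα.ne']
    · have htne : t ≠ 0 := h0.ne'
      have hgt : g t = t⁻¹ * ∫ s in (0:ℝ)..t, (1 - s / t) ^ (α - 1) * φ (x s) k := by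
        show (∫ σ in Set.Ioo (0:ℝ) 1, (1 - σ) ^ (α - 1) * φ (x (σ * t)) k)
            = t⁻¹ * ∫ s in (0:ℝ)..t, (1 - s / t) ^ (α - 1) * φ (x s) k
        have : (∫ σ in Set.Ioo (0:ℝ) 1, (1 - σ) ^ (α - 1) * φ (x (σ * t)) k)
            = ∫ σ in (0:ℝ)..1, (1 - σ * t / t) ^ (α - 1) * φ (x (σ * t)) k := by
          rw [intervalIntegral.integral_of_le (by norm_num : (0:ℝ) ≤ 1),
            MeasureTheory.integral_Ioc_eq_integral_Ioo]
          congr 1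
          ext σ
          rw [mul_div_assoc, div_self htne, mul_one]
        rw [this,
          intervalIntegral.integral_comp_mul_right
            (fun s => (1 - s / t) ^ (α - 1) * φ (x s) k) htne]
        simp [smul_eq_mul]
      rw [hgt, ← mul_assoc]
      have ht1 : t ^ α * t⁻¹ = t ^ (α - 1) := by
        rw [Real.rpow_sub_one htne, div_eq_mul_inv]
      rw [ht1, ← intervalIntegral.integral_const_mul]
      apply intervalIntegral.integral_congr
      intro s hs
      rw [Set.uIcc_of_le ht.1] at hs
      have hst : 0 ≤ t - s := by linarith [hs.2]
      have h1 : (1 : ℝ) - s / t = (t - s) / t := by field_simp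
      show (t - s) ^ (α - 1) * φ (x s) k
          = t ^ (α - 1) * ((1 - s / t) ^ (α - 1) * φ (x s) k)
      have hne2 : t ^ (α - 1) ≠ 0 := by positivity
      rw [h1, Real.div_rpow hst h0.le]
      field_simp
  -- conclude
  apply ContinuousOn.congr (f := fun t => x₀ k + (1 / Real.Gamma α) * (t ^ α * g t))
  · exact continuousOn_const.add (continuousOn_const.mul
      (((Real.continuous_rpow_const hα.le).continuousOn).mul hg))
  · intro t ht
    simp only
    rw [hEq t ht]
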